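/- Let H be a simply connected combinatorial strata structure endowed with a datum (N, {P_J}) of nodal strata, with nodal separating blocks enumerated B₁, …, B_n and maps Φ_m as defined. Fix 0 ≤ m < n and let δ^m ∈ Δ_m be the common value of Φ_m on the vertices of the strata of B_{m+1}. Then for every c ∈ Δ_m with c ≠ δ^m, there exists λ_m(c) ∈ {0,1} such that Φ_{m+1}({i}) = (c, λ_m(c)) for every {i} ∈ Φ_m^{-1}(c). -/

import Mathlib

/-- A combinatorial strata structure with minimal set of indices the (finite) type `I`:
an open subset of `𝒫(I)` (i.e. a family closed under taking subsets) containing all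
singletons. -/
def IsCSS {I : Type*} (H : Set (Finset I)) : Prop :=
  (∀ J ∈ H, ∀ J' : Finset I, J' ⊆ J → J' ∈ H) ∧ ∀ i : I, ({i} : Finset I) ∈ H

/-- `level H k` is `H(k)`, the set of strata of `H` with exactly `k` elements. -/
def level {I : Type*} (H : Set (Finset I)) (k : ℕ) : Set (Finset I) :=
  {J ∈ H | J.card = k}

/-- A `k`-path in `H`: a nonempty sequence of strata of `H(k)` such that the union of
any two consecutive entries lies in `H(k+1)`. -/
def IsKPath {I : Type*} [DecidableEq I] (H : Set (Finset I)) (k : ℕ)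
    (γ : List (Finset I)) : Prop :=
  γ ≠ [] ∧ (∀ J ∈ γ, J ∈ level H k) ∧
    γ.Chain' fun J J' => (J ∪ J') ∈ level H (k + 1)

/-- The path `γ` joins `J` and `J'`. -/
def Joins {I : Type*} (γ : List (Finset I)) (J J' : Finset I) : Prop :=
  γ.head? = some J ∧ γ.getLast? = some J'

/-- The subsupport of a path: the sequence of unions of consecutive entries. -/
def subSup {I : Type*} [DecidableEq I] (γ : List (Finset I)) : List (Finset I) :=
  List.zipWith (· ∪ ·) γ γ.tail

open Classical in
/-- `kappa B γ`: the number of entries of the subsupport of `γ` that belong to `B`. -/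
noncomputable def kappa {I : Type*} [DecidableEq I] (B : Set (Finset I))
    (γ : List (Finset I)) : ℕ :=
  (subSup γ).countP fun J => decide (J ∈ B)

/-- `A` is `k`-connected in `H`: any two elements of `A` are joined by a `k`-path in `H`
with support contained in `A`. -/
def KConnectedIn {I : Type*} [DecidableEq I] (H : Set (Finset I)) (k : ℕ)
    (A : Set (Finset I)) : Prop :=
  ∀ J ∈ A, ∀ J' ∈ A, ∃ γ : List (Finset I),
    IsKPath H k γ ∧ Joins γ J J' ∧ ∀ K ∈ γ, K ∈ A

/-- `C` is a `k`-connected component of `A` in `H`: a maximal nonempty `k`-connected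
subset of `A`. -/
def IsKComponent {I : Type*} [DecidableEq I] (H : Set (Finset I)) (k : ℕ)
    (A C : Set (Finset I)) : Prop :=
  C.Nonempty ∧ C ⊆ A ∧ KConnectedIn H k C ∧
    ∀ C' : Set (Finset I), C ⊆ C' → C' ⊆ A → KConnectedIn H k C' → C' = C

/-- `H` is 1-connected: `H(1)` is 1-connected in `H`. -/
def OneConnected {I : Type*} [DecidableEq I] (H : Set (Finset I)) : Prop :=
  KConnectedIn H 1 (level H 1)

/-- One-sided version of an elementary homotopic pair of 1-paths in `H`. -/
def ElemPairCore {I : Type*} [DecidableEq I] (H : Set (Finset I))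
    (ε ε' : List (Finset I)) : Prop :=
  ε = ε'
  ∨ (∃ i₁ i₂ : I, ε = [{i₁}, {i₂}, {i₁}] ∧ ε' = [{i₁}])
  ∨ (∃ i₁ i₂ i₃ : I, ε = [{i₁}, {i₂}] ∧ ε' = [{i₁}, {i₃}, {i₂}] ∧
      IsKPath H 2 [{i₁, i₃}, {i₃, i₂}])

/-- An elementary homotopic pair of 1-paths in `H` (up to swapping the two paths). -/
def ElemPair {I : Type*} [DecidableEq I] (H : Set (Finset I))
    (ε ε' : List (Finset I)) : Prop :=
  ElemPairCore H ε ε' ∨ ElemPairCore H ε' ε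

/-- `γ₂` is obtained from `γ₁` by an elementary homotopy. -/
def ElemHomotopy {I : Type*} [DecidableEq I] (H : Set (Finset I))
    (γ₁ γ₂ : List (Finset I)) : Prop :=
  ∃ δ ε₁ ε₂ ρ : List (Finset I),
    ElemPair H ε₁ ε₂ ∧ γ₁ = δ ++ ε₁ ++ ρ ∧ γ₂ = δ ++ ε₂ ++ ρ

/-- `γ` and `γ'` are homotopically equivalent in `H` with support in `A`: they are linked
by a finite chain of elementary homotopies in which every intermediate 1-path has
support in `A`. -/
def HomotopicIn {I : Type*} [DecidableEq I] (H A : Set (Finset I))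
    (γ γ' : List (Finset I)) : Prop :=
  (IsKPath H 1 γ ∧ ∀ J ∈ γ, J ∈ A) ∧
    Relation.ReflTransGen
      (fun g₁ g₂ => ElemHomotopy H g₁ g₂ ∧ IsKPath H 1 g₂ ∧ ∀ J ∈ g₂, J ∈ A) γ γ'

/-- A 1-connected subset `A ⊆ H(1)` is simply connected in `H`: any two 1-paths in `H`
with support in `A` joining the same strata are homotopically equivalent in `H` with
support in `A`. -/
def SimplyConnectedIn {I : Type*} [DecidableEq I] (H A : Set (Finset I)) : Prop :=
  KConnectedIn H 1 A ∧
    ∀ γ γ' : List (Finset I), IsKPath H 1 γ → IsKPath H 1 γ' →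
      (∀ J ∈ γ, J ∈ A) → (∀ J ∈ γ', J ∈ A) →
      γ.head? = γ'.head? → γ.getLast? = γ'.getLast? →
      HomotopicIn H A γ γ'

/-- `H` is simply connected: `H(1)` is simply connected in `H`. -/
def SimplyConnected {I : Type*} [DecidableEq I] (H : Set (Finset I)) : Prop :=
  SimplyConnectedIn H (level H 1)

/-- The closure of `A` in `H`: the strata of `H` containing some element of `A`. -/
def Cl {I : Type*} (H A : Set (Finset I)) : Set (Finset I) :=
  {J' ∈ H | ∃ J ∈ A, J ⊆ J'}

/-- A datum of nodal strata `(N, {P_J})` in `H`: a subset `N ⊆ H` together with, for each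
`J ∈ N`, a partition `P_J = {J₊, J₋}` of `J` into two nonempty parts, such that for every
`J ∈ N` and `J' ⊆ J` one has `J' ∈ N` iff `J' ∩ J₊ ≠ ∅ ≠ J' ∩ J₋`, and in that case
`P_{J'} = {J' ∩ J₊, J' ∩ J₋}`. -/
structure NodalDatum {I : Type*} [DecidableEq I] (H : Set (Finset I)) : Type _ where
  N : Set (Finset I)
  N_sub : N ⊆ H
  plus : Finset I → Finset I
  minus : Finset I → Finset I
  plus_nonempty : ∀ J ∈ N, (plus J).Nonempty
  minus_nonempty : ∀ J ∈ N, (minus J).Nonempty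
  union_eq : ∀ J ∈ N, plus J ∪ minus J = J
  disj : ∀ J ∈ N, Disjoint (plus J) (minus J)
  mem_iff : ∀ J ∈ N, ∀ J' : Finset I, J' ⊆ J →
    (J' ∈ N ↔ (J' ∩ plus J).Nonempty ∧ (J' ∩ minus J).Nonempty)
  part_eq : ∀ J ∈ N, ∀ J' : Finset I, J' ⊆ J → J' ∈ N →
    ({plus J', minus J'} : Set (Finset I)) = {J' ∩ plus J, J' ∩ minus J}

/-- `N*`: the set of uninterrupted nodal strata, i.e. `J ∈ N` with `Cl_H({J}) ⊆ N`. -/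
def Nstar {I : Type*} [DecidableEq I] {H : Set (Finset I)} (D : NodalDatum H) :
    Set (Finset I) :=
  {J ∈ D.N | ∀ J' ∈ H, J ⊆ J' → J' ∈ D.N}

/-- A nodal block of `N` in `H`: a 2-connected component of `N(2) = N ∩ H(2)` in `H`. -/
def IsNodalBlock {I : Type*} [DecidableEq I] {H : Set (Finset I)} (D : NodalDatum H)
    (B : Set (Finset I)) : Prop :=
  IsKComponent H 2 (D.N ∩ level H 2) B

/-- A nodal separating block: a nodal block contained in `N*`. -/
def IsSepBlock {I : Type*} [DecidableEq I] {H : Set (Finset I)} (D : NodalDatum H)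
    (B : Set (Finset I)) : Prop :=
  IsNodalBlock D B ∧ B ⊆ Nstar D

/-- The separator set: the union of all nodal separating blocks. -/
def SepSet {I : Type*} [DecidableEq I] {H : Set (Finset I)} (D : NodalDatum H) :
    Set (Finset I) :=
  ⋃₀ {B | IsSepBlock D B}

/-- `A_B(i)`: the set of `{j} ∈ H(1)` joined to `{i}` by a 1-path `γ` in `H` with
`κ_B(γ)` even. -/
def ABset {I : Type*} [DecidableEq I] (H B : Set (Finset I)) (i : I) : Set (Finset I) :=
  {J ∈ level H 1 | ∃ γ : List (Finset I),
    IsKPath H 1 γ ∧ Joins γ {i} J ∧ Even (kappa B γ)}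

/-- `B_B(i)`: the set of `{j} ∈ H(1)` joined to `{i}` by a 1-path `γ` in `H` with
`κ_B(γ)` odd. -/
def BBset {I : Type*} [DecidableEq I] (H B : Set (Finset I)) (i : I) : Set (Finset I) :=
  {J ∈ level H 1 | ∃ γ : List (Finset I),
    IsKPath H 1 γ ∧ Joins γ {i} J ∧ Odd (kappa B γ)}

open Classical in
/-- `Φ_m` for the enumeration `B` of the nodal separating blocks and base point `i₀`,
evaluated on the singleton stratum `{i}` (identified with `i`):
`Φ_m({i})(ℓ) = 0` if `{i} ∈ A_{B_ℓ}(i₀)` and `Φ_m({i})(ℓ) = 1` (`true`) if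
`{i} ∈ B_{B_ℓ}(i₀)`. -/
noncomputable def PhiM {I : Type*} [DecidableEq I] {n : ℕ} (H : Set (Finset I)) (i₀ : I)
    (B : Fin n → Set (Finset I)) (m : ℕ) (hm : m ≤ n) (i : I) : Fin m → Bool :=
  fun ℓ => decide (({i} : Finset I) ∈ BBset H (B (Fin.castLE hm ℓ)) i₀)


/-! ### Auxiliary lemmas -/

namespace Statement10Aux

set_option linter.unusedSectionVars false

variable {I : Type*} [DecidableEq I]

lemma subSup_cons₂ (x y : Finset I) (l : List (Finset I)) :
    subSup (x :: y :: l) = (x ∪ y) :: subSup (y :: l) := rfl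

lemma subSup_snoc_append (a : List (Finset I)) (x : Finset I) (b : List (Finset I)) :
    subSup ((a ++ [x]) ++ b) = subSup (a ++ [x]) ++ subSup (x :: b) := by
  induction a with
  | nil => rfl
  | cons y a' ih =>
    cases a' with
    | nil => rfl
    | cons z a'' =>
      show (y ∪ z) :: subSup (((z :: a'') ++ [x]) ++ b)
          = ((y ∪ z) :: subSup ((z :: a'') ++ [x])) ++ subSup (x :: b)
      rw [ih]
      rfl

lemma kappa_snoc_append (C : Set (Finset I)) (a : List (Finset I)) (x : Finset I)
    (b : List (Finset I)) :
    kappa C ((a ++ [x]) ++ b) = kappa C (a ++ [x]) + kappa C (x :: b) := by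
  unfold kappa
  rw [subSup_snoc_append, List.countP_append]

lemma kappa_cons (C : Set (Finset I)) (d x : Finset I) (L : List (Finset I)) :
    kappa C (d :: x :: L) = kappa C [d, x] + kappa C (x :: L) := by
  unfold kappa
  rw [subSup_cons₂, List.countP_cons]
  show _ + _ = List.countP _ (subSup [d, x]) + _
  rw [show subSup [d, x] = [d ∪ x] from rfl]
  rw [List.countP_cons]
  simp [Nat.add_comm]

lemma kappa_concat (C : Set (Finset I)) {γ₁ : List (Finset I)} {K : Finset I}
    (h : γ₁.getLast? = some K) (t : List (Finset I)) :
    kappa C (γ₁ ++ t) = kappa C γ₁ + kappa C (K :: t) := by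
  obtain ⟨a, rfl⟩ := List.getLast?_eq_some_iff.mp h
  exact kappa_snoc_append C a K t

lemma kappa_mod_core (C : Set (Finset I)) (ε₁ ε₂ : List (Finset I))
    (hne₁ : ε₁ ≠ []) (hne₂ : ε₂ ≠ [])
    (hh : ε₁.head? = ε₂.head?) (hl : ε₁.getLast? = ε₂.getLast?)
    (hk : kappa C ε₁ % 2 = kappa C ε₂ % 2) (δ ρ : List (Finset I)) :
    kappa C (δ ++ ε₁ ++ ρ) % 2 = kappa C (δ ++ ε₂ ++ ρ) % 2 := by
  induction δ with
  | nil =>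
    obtain ⟨b, L, hbl⟩ := List.exists_cons_of_ne_nil hne₁
    obtain ⟨l, hl₁⟩ : ∃ l, ε₁.getLast? = some l :=
      Option.isSome_iff_exists.mp (List.getLast?_isSome.mpr hne₁)
    have hl₂ : ε₂.getLast? = some l := hl ▸ hl₁
    simp only [List.nil_append]
    rw [kappa_concat C hl₁ ρ, kappa_concat C hl₂ ρ]
    omega
  | cons d δ' ih =>
    obtain ⟨x, t₁, e₁⟩ := List.exists_cons_of_ne_nil
      (show δ' ++ ε₁ ++ ρ ≠ [] by simp [hne₁])
    obtain ⟨t₂, e₂⟩ : ∃ t₂, δ' ++ ε₂ ++ ρ = x :: t₂ := by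
      have hhead : (δ' ++ ε₁ ++ ρ).head? = (δ' ++ ε₂ ++ ρ).head? := by
        cases δ' with
        | nil =>
          obtain ⟨b₁, L₁, hb₁⟩ := List.exists_cons_of_ne_nil hne₁
          obtain ⟨b₂, L₂, hb₂⟩ := List.exists_cons_of_ne_nil hne₂
          have : b₁ = b₂ := by
            rw [hb₁, hb₂] at hh; simpa using hh
          subst this
          rw [hb₁, hb₂]; rfl
        | cons e t => rfl
      rw [e₁] at hhead
      exact List.head?_eq_some_iff.mp hhead.symm
    show kappa C (d :: (δ' ++ ε₁ ++ ρ)) % 2 = kappa C (d :: (δ' ++ ε₂ ++ ρ)) % 2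
    rw [e₁, e₂, kappa_cons C d x t₁, kappa_cons C d x t₂]
    rw [e₁, e₂] at ih
    omega


lemma path_singleton {H : Set (Finset I)} {k : ℕ} {f : Finset I} (hf : f ∈ level H k) :
    IsKPath H k [f] ∧ Joins [f] f f := by
  refine ⟨⟨by simp, ?_, List.isChain_singleton _⟩, rfl, rfl⟩
  intro K hK
  simp only [List.mem_singleton] at hK
  subst hK; exact hf

lemma path_cons {H : Set (Finset I)} {k : ℕ} {γ : List (Finset I)} {e J' : Finset I}
    (hγ : IsKPath H k γ) (hj : Joins γ e J') {f : Finset I} (hf : f ∈ level H k)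
    (hef : f ∪ e ∈ level H (k + 1)) :
    IsKPath H k (f :: γ) ∧ Joins (f :: γ) f J' := by
  obtain ⟨hne, hmem, hch⟩ := hγ
  refine ⟨⟨List.cons_ne_nil _ _, ?_, ?_⟩, rfl, ?_⟩
  · intro K hK
    rcases List.mem_cons.mp hK with rfl | h
    · exact hf
    · exact hmem K h
  · show List.IsChain _ _
    rw [List.isChain_cons]
    refine ⟨?_, hch⟩
    intro y hy
    rw [hj.1, Option.mem_some_iff] at hy
    subst hy; exact hef
  · obtain ⟨g, t, rfl⟩ := List.exists_cons_of_ne_nil hne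
    rw [List.getLast?_cons_cons]
    exact hj.2

lemma path_snoc {H : Set (Finset I)} {k : ℕ} {γ : List (Finset I)} {J e : Finset I}
    (hγ : IsKPath H k γ) (hj : Joins γ J e) {f : Finset I} (hf : f ∈ level H k)
    (hef : e ∪ f ∈ level H (k + 1)) :
    IsKPath H k (γ ++ [f]) ∧ Joins (γ ++ [f]) J f := by
  obtain ⟨hne, hmem, hch⟩ := hγ
  refine ⟨⟨by simp, ?_, ?_⟩, ?_, List.getLast?_concat⟩
  · intro K hK
    rcases List.mem_append.mp hK with h | h
    · exact hmem K h
    · simp only [List.mem_singleton] at h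
      subst h; exact hf
  · show List.IsChain _ _
    rw [List.isChain_append]
    refine ⟨hch, List.isChain_singleton _, ?_⟩
    intro a ha b hb
    rw [hj.2, Option.mem_some_iff] at ha
    simp only [List.head?, Option.mem_some_iff] at hb
    subst ha; subst hb; exact hef
  · obtain ⟨g, t, rfl⟩ := List.exists_cons_of_ne_nil hne
    exact hj.1

lemma kpath_append {H : Set (Finset I)} {k : ℕ} {γ₁ γ₂ : List (Finset I)} {J K J' : Finset I}
    (h₁ : IsKPath H k γ₁) (h₂ : IsKPath H k γ₂) (j₁ : Joins γ₁ J K) (j₂ : Joins γ₂ K J') :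
    IsKPath H k (γ₁ ++ γ₂.tail) ∧ Joins (γ₁ ++ γ₂.tail) J J' := by
  obtain ⟨hne₁, hm₁, hc₁⟩ := h₁
  obtain ⟨hne₂, hm₂, hc₂⟩ := h₂
  cases γ₂ with
  | nil => exact absurd rfl hne₂
  | cons g t =>
    have hgK : g = K := by simpa using j₂.1
    subst hgK
    constructor
    · refine ⟨by simp [hne₁], ?_, ?_⟩
      · intro x hx
        rcases List.mem_append.mp hx with h | h
        · exact hm₁ x h
        · exact hm₂ x (List.mem_cons_of_mem _ h)
      · show List.IsChain _ _
        rw [List.isChain_append]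
        refine ⟨hc₁, hc₂.tail, ?_⟩
        intro a ha b hb
        rw [j₁.2, Option.mem_some_iff] at ha
        subst ha
        exact (List.isChain_cons.mp hc₂).1 b hb
    · constructor
      · obtain ⟨a, l, rfl⟩ := List.exists_cons_of_ne_nil hne₁
        exact j₁.1
      · cases t with
        | nil =>
          have hKJ' : g = J' := by simpa using j₂.2
          subst hKJ'
          simpa using j₁.2
        | cons b t' =>
          show (γ₁ ++ (b :: t')).getLast? = some J'
          rw [List.getLast?_append]
          have : (b :: t').getLast? = some J' := by
            rw [← List.getLast?_cons_cons (a := g)]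
            exact j₂.2
          rw [this]
          rfl

lemma kpath_reverse {H : Set (Finset I)} {k : ℕ} {γ : List (Finset I)} {J J' : Finset I}
    (h : IsKPath H k γ) (hj : Joins γ J J') :
    IsKPath H k γ.reverse ∧ Joins γ.reverse J' J := by
  obtain ⟨hne, hm, hc⟩ := h
  refine ⟨⟨by simp [hne], fun x hx => hm x (List.mem_reverse.mp hx), ?_⟩, ?_, ?_⟩
  · show List.IsChain _ _
    rw [List.isChain_reverse]
    refine List.IsChain.imp ?_ hc
    intro a b hab
    show b ∪ a ∈ level H (k + 1)
    rwa [Finset.union_comm] at hab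
  · rw [List.head?_reverse]; exact hj.2
  · rw [List.getLast?_reverse]; exact hj.1

lemma singleton_mem_level_one {H : Set (Finset I)} (hH : IsCSS H) (i : I) :
    ({i} : Finset I) ∈ level H 1 := ⟨hH.2 i, Finset.card_singleton i⟩

lemma exists_path {H : Set (Finset I)} (hH : IsCSS H) (hsc : SimplyConnected H) (i j : I) :
    ∃ γ : List (Finset I), IsKPath H 1 γ ∧ Joins γ {i} {j} := by
  obtain ⟨γ, h1, h2, -⟩ := hsc.1 {i} (singleton_mem_level_one hH i) {j}
    (singleton_mem_level_one hH j)
  exact ⟨γ, h1, h2⟩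


lemma absorb {H : Set (Finset I)} {D : NodalDatum H} {C : Set (Finset I)}
    (hC : IsSepBlock D C) {e f : Finset I} (he : e ∈ C)
    (hfN : f ∈ D.N) (hf2 : f ∈ level H 2) (hu : e ∪ f ∈ level H 3) : f ∈ C := by
  obtain ⟨⟨hnemp, hsub, hconn, hmax⟩, hstar⟩ := hC
  have hC' : KConnectedIn H 2 (insert f C) := by
    intro J hJ J' hJ'
    rcases Set.mem_insert_iff.mp hJ with hJf | hJC
    · rcases Set.mem_insert_iff.mp hJ' with hJ'f | hJ'C
      · rw [hJf, hJ'f]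
        obtain ⟨hp, hjo⟩ := path_singleton (H := H) (k := 2) hf2
        exact ⟨[f], hp, hjo, fun K hK => by
          simp only [List.mem_singleton] at hK; subst hK; exact Set.mem_insert _ _⟩
      · rw [hJf]
        obtain ⟨γ, hγ, hjoin, hsupp⟩ := hconn e he J' hJ'C
        obtain ⟨hp, hjo⟩ := path_cons hγ hjoin hf2 (by rwa [Finset.union_comm] at hu)
        refine ⟨f :: γ, hp, hjo, ?_⟩
        intro K hK
        rcases List.mem_cons.mp hK with rfl | h
        · exact Set.mem_insert _ _
        · exact Set.mem_insert_of_mem _ (hsupp K h)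
    · rcases Set.mem_insert_iff.mp hJ' with hJ'f | hJ'C
      · rw [hJ'f]
        obtain ⟨γ, hγ, hjoin, hsupp⟩ := hconn J hJC e he
        obtain ⟨hp, hjo⟩ := path_snoc hγ hjoin hf2 hu
        refine ⟨γ ++ [f], hp, hjo, ?_⟩
        intro K hK
        rcases List.mem_append.mp hK with h | h
        · exact Set.mem_insert_of_mem _ (hsupp K h)
        · simp only [List.mem_singleton] at h; subst h; exact Set.mem_insert _ _
      · obtain ⟨γ, hγ, hjoin, hsupp⟩ := hconn J hJC J' hJ'C
        exact ⟨γ, hγ, hjoin, fun K hK => Set.mem_insert_of_mem _ (hsupp K hK)⟩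
  have heq := hmax (insert f C) (Set.subset_insert _ _)
    (by
      intro x hx
      rcases Set.mem_insert_iff.mp hx with rfl | hx
      · exact ⟨hfN, hf2⟩
      · exact hsub hx) hC'
  rw [← heq]
  exact Set.mem_insert _ _

lemma blocks_eq_of_inter {H : Set (Finset I)} {D : NodalDatum H} {C₁ C₂ : Set (Finset I)}
    (h₁ : IsSepBlock D C₁) (h₂ : IsSepBlock D C₂)
    {e : Finset I} (he₁ : e ∈ C₁) (he₂ : e ∈ C₂) : C₁ = C₂ := by
  have step : ∀ {X Y : Set (Finset I)}, KConnectedIn H 2 X → KConnectedIn H 2 Y →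
      e ∈ X → e ∈ Y → ∀ {J}, J ∈ X → ∀ {J'}, J' ∈ Y →
      ∃ γ, IsKPath H 2 γ ∧ Joins γ J J' ∧ ∀ x ∈ γ, x ∈ X ∪ Y := by
    intro X Y hX hY heX heY J hJ J' hJ'
    obtain ⟨γ₁, p₁, j₁, s₁⟩ := hX J hJ e heX
    obtain ⟨γ₂, p₂, j₂, s₂⟩ := hY e heY J' hJ'
    obtain ⟨p, j⟩ := kpath_append p₁ p₂ j₁ j₂
    refine ⟨γ₁ ++ γ₂.tail, p, j, ?_⟩
    intro x hx
    rcases List.mem_append.mp hx with h | h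
    · exact Or.inl (s₁ x h)
    · exact Or.inr (s₂ x (List.mem_of_mem_tail h))
  have hconn : KConnectedIn H 2 (C₁ ∪ C₂) := by
    intro J hJ J' hJ'
    rcases hJ with hJ | hJ <;> rcases hJ' with hJ' | hJ'
    · obtain ⟨γ, p, j, s⟩ := h₁.1.2.2.1 J hJ J' hJ'
      exact ⟨γ, p, j, fun x hx => Or.inl (s x hx)⟩
    · exact step h₁.1.2.2.1 h₂.1.2.2.1 he₁ he₂ hJ hJ'
    · obtain ⟨γ, p, j, s⟩ := step h₂.1.2.2.1 h₁.1.2.2.1 he₂ he₁ hJ hJ'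
      exact ⟨γ, p, j, fun x hx => (s x hx).symm⟩
    · obtain ⟨γ, p, j, s⟩ := h₂.1.2.2.1 J hJ J' hJ'
      exact ⟨γ, p, j, fun x hx => Or.inr (s x hx)⟩
  have e₁ := h₁.1.2.2.2 (C₁ ∪ C₂) Set.subset_union_left
    (Set.union_subset h₁.1.2.1 h₂.1.2.1) hconn
  have e₂ := h₂.1.2.2.2 (C₁ ∪ C₂) Set.subset_union_right
    (Set.union_subset h₁.1.2.1 h₂.1.2.1) hconn
  exact e₁.symm.trans e₂

lemma mem_block_iff_of_union {H : Set (Finset I)} {D : NodalDatum H} {C : Set (Finset I)}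
    (hC : IsSepBlock D C) {p q : Finset I} (hpN : p ∈ D.N) (hqN : q ∈ D.N)
    (hp2 : p ∈ level H 2) (hq2 : q ∈ level H 2) (hu : p ∪ q ∈ level H 3) :
    (p ∈ C ↔ q ∈ C) :=
  ⟨fun h => absorb hC h hqN hq2 hu,
   fun h => absorb hC h hpN hp2 (by rwa [Finset.union_comm])⟩

lemma union_eq_of_two_subsets {T e f : Finset I} (hT : T.card = 3) (he : e ⊆ T) (hf : f ⊆ T)
    (he2 : e.card = 2) (hf2 : f.card = 2) (hef : e ≠ f) : e ∪ f = T := by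
  have hsub : e ∪ f ⊆ T := Finset.union_subset he hf
  refine Finset.eq_of_subset_of_card_le hsub ?_
  obtain ⟨x, hxf, hxe⟩ : ∃ x ∈ f, x ∉ e := by
    by_contra hcon
    push_neg at hcon
    exact hef (Finset.eq_of_subset_of_card_le hcon (by omega)).symm
  have hins : insert x e ⊆ e ∪ f :=
    Finset.insert_subset (Finset.mem_union_right _ hxf) Finset.subset_union_left
  have hcard := Finset.card_le_card hins
  rw [Finset.card_insert_of_notMem hxe, he2] at hcard
  omega

lemma pair_mem_N_iff {H : Set (Finset I)} (D : NodalDatum H) {T : Finset I} (hN : T ∈ D.N)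
    {u w : I} (hu : u ∈ T) (hw : w ∈ T) :
    (({u, w} : Finset I) ∈ D.N ↔ ¬((u ∈ D.plus T) ↔ (w ∈ D.plus T))) := by
  have hsub : ({u, w} : Finset I) ⊆ T :=
    Finset.insert_subset hu (Finset.singleton_subset_iff.mpr hw)
  rw [D.mem_iff T hN _ hsub]
  have hside : ∀ v ∈ T, (v ∈ D.minus T ↔ v ∉ D.plus T) := by
    intro v hv
    constructor
    · intro hm hp
      exact (Finset.disjoint_left.mp (D.disj T hN) hp) hm
    · intro hp
      have hvv : v ∈ D.plus T ∪ D.minus T := by rw [D.union_eq T hN]; exact hv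
      rcases Finset.mem_union.mp hvv with h | h
      · exact absurd h hp
      · exact h
  have h1 : (({u, w} : Finset I) ∩ D.plus T).Nonempty ↔ (u ∈ D.plus T ∨ w ∈ D.plus T) := by
    constructor
    · rintro ⟨v, hv⟩
      rw [Finset.mem_inter] at hv
      rcases Finset.mem_insert.mp hv.1 with rfl | hv1
      · exact Or.inl hv.2
      · rw [Finset.mem_singleton] at hv1
        subst hv1; exact Or.inr hv.2
    · rintro (h | h)
      · exact ⟨u, Finset.mem_inter.mpr ⟨Finset.mem_insert_self _ _, h⟩⟩
      · exact ⟨w, Finset.mem_inter.mpr ⟨Finset.mem_insert_of_mem (Finset.mem_singleton_self _), h⟩⟩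
  have h2 : (({u, w} : Finset I) ∩ D.minus T).Nonempty ↔ (u ∉ D.plus T ∨ w ∉ D.plus T) := by
    constructor
    · rintro ⟨v, hv⟩
      rw [Finset.mem_inter] at hv
      rcases Finset.mem_insert.mp hv.1 with rfl | hv1
      · exact Or.inl ((hside v hu).mp hv.2)
      · rw [Finset.mem_singleton] at hv1
        subst hv1; exact Or.inr ((hside _ hw).mp hv.2)
    · rintro (h | h)
      · exact ⟨u, Finset.mem_inter.mpr ⟨Finset.mem_insert_self _ _, (hside u hu).mpr h⟩⟩
      · exact ⟨w, Finset.mem_inter.mpr ⟨Finset.mem_insert_of_mem (Finset.mem_singleton_self _),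
          (hside w hw).mpr h⟩⟩
  rw [h1, h2]
  tauto


set_option maxHeartbeats 1000000 in
open Classical in
lemma triangle_labeled {H : Set (Finset I)} (hH : IsCSS H) {D : NodalDatum H}
    {C : Set (Finset I)} (hC : IsSepBlock D C) {x y z : I}
    (hxy : x ≠ y) (hxz : x ≠ z) (hyz : y ≠ z) (hT : ({x, y, z} : Finset I) ∈ H) :
    ((if ({x, y} : Finset I) ∈ C then 1 else 0) + (if ({x, z} : Finset I) ∈ C then 1 else 0)
      + (if ({y, z} : Finset I) ∈ C then 1 else 0)) % 2 = 0 := by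
  have hcT : ({x, y, z} : Finset I).card = 3 := by
    rw [Finset.card_insert_of_notMem (by simp [hxy, hxz]),
      Finset.card_insert_of_notMem (by simp [hyz]), Finset.card_singleton]
  have hxT : x ∈ ({x, y, z} : Finset I) := by simp
  have hyT : y ∈ ({x, y, z} : Finset I) := by simp
  have hzT : z ∈ ({x, y, z} : Finset I) := by simp
  have hsubxy : ({x, y} : Finset I) ⊆ {x, y, z} :=
    Finset.insert_subset hxT (Finset.singleton_subset_iff.mpr hyT)
  have hsubxz : ({x, z} : Finset I) ⊆ {x, y, z} :=
    Finset.insert_subset hxT (Finset.singleton_subset_iff.mpr hzT)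
  have hsubyz : ({y, z} : Finset I) ⊆ {x, y, z} :=
    Finset.insert_subset hyT (Finset.singleton_subset_iff.mpr hzT)
  have hcxy : ({x, y} : Finset I).card = 2 := Finset.card_pair hxy
  have hcxz : ({x, z} : Finset I).card = 2 := Finset.card_pair hxz
  have hcyz : ({y, z} : Finset I).card = 2 := Finset.card_pair hyz
  by_cases hN : ({x, y, z} : Finset I) ∈ D.N
  swap
  · have notC : ∀ p : Finset I, p ⊆ {x, y, z} → p ∉ C := by
      intro p hp hpC
      exact hN ((hC.2 hpC).2 _ hT hp)
    rw [if_neg (notC _ hsubxy), if_neg (notC _ hsubxz), if_neg (notC _ hsubyz)]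
  · have hNxy := pair_mem_N_iff D hN hxT hyT
    have hNxz := pair_mem_N_iff D hN hxT hzT
    have hNyz := pair_mem_N_iff D hN hyT hzT
    have notC : ∀ p : Finset I, p ∉ D.N → p ∉ C := fun p hpN hpC => hpN (hC.1.2.1 hpC).1
    have hlev : ∀ p : Finset I, p ⊆ ({x, y, z} : Finset I) → p.card = 2 → p ∈ level H 2 :=
      fun p hp h2 => ⟨hH.1 _ hT p hp, h2⟩
    have pairne : ∀ {a b c d : I}, a ≠ c → a ≠ d → ({a, b} : Finset I) ≠ {c, d} := by
      intro a b c d h1 h2 h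
      have ha : a ∈ ({c, d} : Finset I) := by rw [← h]; simp
      rcases Finset.mem_insert.mp ha with h' | h'
      · exact h1 h'
      · exact h2 (Finset.mem_singleton.mp h')
    have key : ∀ p q r : Finset I, p ∈ D.N → q ∈ D.N → r ∉ D.N →
        p ⊆ ({x, y, z} : Finset I) → q ⊆ ({x, y, z} : Finset I) →
        p.card = 2 → q.card = 2 → p ≠ q →
        ((if p ∈ C then 1 else 0) + (if q ∈ C then 1 else 0)
          + (if r ∈ C then 1 else 0)) % 2 = 0 := by
      intro p q r hpN hqN hrN hp hq hp2 hq2 hpq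
      have hu : p ∪ q ∈ level H 3 := by
        rw [union_eq_of_two_subsets hcT hp hq hp2 hq2 hpq]
        exact ⟨hT, hcT⟩
      have hiff := mem_block_iff_of_union hC hpN hqN (hlev _ hp hp2) (hlev _ hq hq2) hu
      rw [if_neg (notC _ hrN)]
      by_cases hmem : p ∈ C
      · rw [if_pos hmem, if_pos (hiff.mp hmem)]
      · rw [if_neg hmem, if_neg (fun h => hmem (hiff.mpr h))]
    by_cases sx : x ∈ D.plus ({x, y, z} : Finset I) <;>
      by_cases sy : y ∈ D.plus ({x, y, z} : Finset I) <;>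
      by_cases sz : z ∈ D.plus ({x, y, z} : Finset I)
    · rw [if_neg (notC _ (by rw [hNxy]; tauto)), if_neg (notC _ (by rw [hNxz]; tauto)),
        if_neg (notC _ (by rw [hNyz]; tauto))]
    · -- sx, sy, ¬sz : crossing {x,z}, {y,z}
      have h := key {x, z} {y, z} {x, y} (by rw [hNxz]; tauto) (by rw [hNyz]; tauto)
        (by rw [hNxy]; tauto) hsubxz hsubyz hcxz hcyz (pairne hxy hxz)
      omega
    · -- sx, ¬sy, sz : crossing {x,y}, {y,z}
      have h := key {x, y} {y, z} {x, z} (by rw [hNxy]; tauto) (by rw [hNyz]; tauto)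
        (by rw [hNxz]; tauto) hsubxy hsubyz hcxy hcyz (pairne hxy hxz)
      omega
    · -- sx, ¬sy, ¬sz : crossing {x,y}, {x,z}
      have h := key {x, y} {x, z} {y, z} (by rw [hNxy]; tauto) (by rw [hNxz]; tauto)
        (by rw [hNyz]; tauto) hsubxy hsubxz hcxy hcxz
        (by rw [Finset.pair_comm x y]; exact pairne hxy.symm hyz)
      omega
    · -- ¬sx, sy, sz : crossing {x,y}, {x,z}
      have h := key {x, y} {x, z} {y, z} (by rw [hNxy]; tauto) (by rw [hNxz]; tauto)
        (by rw [hNyz]; tauto) hsubxy hsubxz hcxy hcxz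
        (by rw [Finset.pair_comm x y]; exact pairne hxy.symm hyz)
      omega
    · -- ¬sx, sy, ¬sz : crossing {x,y}, {y,z}
      have h := key {x, y} {y, z} {x, z} (by rw [hNxy]; tauto) (by rw [hNyz]; tauto)
        (by rw [hNxz]; tauto) hsubxy hsubyz hcxy hcyz (pairne hxy hxz)
      omega
    · -- ¬sx, ¬sy, sz : crossing {x,z}, {y,z}
      have h := key {x, z} {y, z} {x, y} (by rw [hNxz]; tauto) (by rw [hNyz]; tauto)
        (by rw [hNxy]; tauto) hsubxz hsubyz hcxz hcyz (pairne hxy hxz)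
      omega
    · rw [if_neg (notC _ (by rw [hNxy]; tauto)), if_neg (notC _ (by rw [hNxz]; tauto)),
        if_neg (notC _ (by rw [hNyz]; tauto))]


open Classical in
lemma kappa_pair (C : Set (Finset I)) (a b : I) :
    kappa C [({a} : Finset I), {b}] % 2 = (if ({a, b} : Finset I) ∈ C then 1 else 0) % 2 := by
  unfold kappa
  rw [show subSup [({a} : Finset I), {b}] = [({a} : Finset I) ∪ {b}] from rfl]
  rw [List.countP_cons,
    show ({a} : Finset I) ∪ {b} = {a, b} from (Finset.insert_eq a {b}).symm]
  simp

set_option maxHeartbeats 1000000 in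
open Classical in
lemma kappa_elem_core {H : Set (Finset I)} (hH : IsCSS H) {D : NodalDatum H}
    {C : Set (Finset I)} (hC : IsSepBlock D C) {ε₁ ε₂ : List (Finset I)}
    (hp : ElemPairCore H ε₁ ε₂) (δ ρ : List (Finset I)) :
    kappa C (δ ++ ε₁ ++ ρ) % 2 = kappa C (δ ++ ε₂ ++ ρ) % 2 := by
  rcases hp with rfl | ⟨a, b, rfl, rfl⟩ | ⟨a, b, c', rfl, rfl, hpath⟩
  · rfl
  · refine kappa_mod_core C [({a} : Finset I), {b}, {a}] [({a} : Finset I)]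
      (by simp) (by simp) rfl rfl ?_ δ ρ
    rw [show kappa C [({a} : Finset I), {b}, {a}]
        = kappa C [({a} : Finset I), {b}] + kappa C [({b} : Finset I), {a}] from
      kappa_cons C {a} {b} [{a}]]
    rw [show kappa C [({a} : Finset I)] = 0 from rfl]
    have h1 := kappa_pair C a b
    have h2 := kappa_pair C b a
    rw [Finset.pair_comm b a] at h2
    omega
  · refine kappa_mod_core C [({a} : Finset I), {b}] [({a} : Finset I), {c'}, {b}]
      (by simp) (by simp) rfl ?_ ?_ δ ρ
    · rfl
    · rw [show kappa C [({a} : Finset I), {c'}, {b}]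
          = kappa C [({a} : Finset I), {c'}] + kappa C [({c'} : Finset I), {b}] from
        kappa_cons C {a} {c'} [{b}]]
      have hac : ({a, c'} : Finset I) ∈ level H 2 := hpath.2.1 _ (by simp)
      have hcb : ({c', b} : Finset I) ∈ level H 2 := hpath.2.1 _ (by simp)
      have hu : ({a, c'} : Finset I) ∪ {c', b} ∈ level H 3 :=
        (List.isChain_cons_cons.mp hpath.2.2).1
      have hne_ac : a ≠ c' := by
        intro h
        have h2 := hac.2
        rw [h] at h2
        rw [show ({c', c'} : Finset I) = {c'} from by ext v; simp,
          Finset.card_singleton] at h2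
        omega
      have hne_cb : c' ≠ b := by
        intro h
        have h2 := hcb.2
        rw [h] at h2
        rw [show ({b, b} : Finset I) = {b} from by ext v; simp,
          Finset.card_singleton] at h2
        omega
      have hTeq : ({a, c'} : Finset I) ∪ {c', b} = {a, c', b} := by
        ext v
        simp only [Finset.mem_union, Finset.mem_insert, Finset.mem_singleton]
        tauto
      have hne_ab : a ≠ b := by
        intro h
        have h3 := hu.2
        rw [hTeq, h] at h3
        rw [show ({b, c', b} : Finset I) = {b, c'} from by
          ext v; simp only [Finset.mem_insert, Finset.mem_singleton]; tauto,
          Finset.card_pair fun hbc => hne_cb hbc.symm] at h3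
        omega
      have htri := triangle_labeled hH hC hne_ac hne_ab hne_cb
        (by rw [← hTeq]; exact hu.1)
      -- htri : (ind {a,c'} + ind {a,b} + ind {c',b}) % 2 = 0
      have k1 := kappa_pair C a b
      have k2 := kappa_pair C a c'
      have k3 := kappa_pair C c' b
      omega

open Classical in
lemma kappa_elem {H : Set (Finset I)} (hH : IsCSS H) {D : NodalDatum H}
    {C : Set (Finset I)} (hC : IsSepBlock D C) {g₁ g₂ : List (Finset I)}
    (h : ElemHomotopy H g₁ g₂) : kappa C g₁ % 2 = kappa C g₂ % 2 := by
  obtain ⟨δ, ε₁, ε₂, ρ, hpair, rfl, rfl⟩ := h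
  rcases hpair with hp | hp
  · exact kappa_elem_core hH hC hp δ ρ
  · exact (kappa_elem_core hH hC hp δ ρ).symm

lemma kappa_parity_eq {H : Set (Finset I)} (hH : IsCSS H) (hsc : SimplyConnected H)
    {D : NodalDatum H} {C : Set (Finset I)} (hC : IsSepBlock D C)
    {γ γ' : List (Finset I)} (h1 : IsKPath H 1 γ) (h2 : IsKPath H 1 γ')
    (hh : γ.head? = γ'.head?) (hl : γ.getLast? = γ'.getLast?) :
    kappa C γ % 2 = kappa C γ' % 2 := by
  obtain ⟨-, hrel⟩ := hsc.2 γ γ' h1 h2 h1.2.1 h2.2.1 hh hl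
  clear h1 h2 hh hl
  induction hrel with
  | refl => rfl
  | tail hstep hlast ih => exact ih.trans (kappa_elem hH hC hlast.1)

open Classical in
noncomputable def lamb (H C : Set (Finset I)) (i₀ i : I) : Bool :=
  decide (({i} : Finset I) ∈ BBset H C i₀)

lemma lamb_eq_true_iff {H : Set (Finset I)} (hH : IsCSS H) (hsc : SimplyConnected H)
    {D : NodalDatum H} {C : Set (Finset I)} (hC : IsSepBlock D C) (i₀ : I) {j : I}
    {γ : List (Finset I)} (hγ : IsKPath H 1 γ) (hj : Joins γ ({i₀} : Finset I) {j}) :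
    (lamb H C i₀ j = true ↔ kappa C γ % 2 = 1) := by
  simp only [lamb, decide_eq_true_eq]
  constructor
  · rintro ⟨-, γ', hγ', hj', hodd⟩
    have := kappa_parity_eq hH hsc hC hγ' hγ (hj'.1.trans hj.1.symm) (hj'.2.trans hj.2.symm)
    rw [Nat.odd_iff] at hodd
    omega
  · intro h
    exact ⟨singleton_mem_level_one hH j, γ, hγ, hj, Nat.odd_iff.mpr h⟩

open Classical in
lemma lamb_step {H : Set (Finset I)} (hH : IsCSS H) (hsc : SimplyConnected H)
    {D : NodalDatum H} {C : Set (Finset I)} (hC : IsSepBlock D C) (i₀ : I) {u v : I}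
    (huv : ({u, v} : Finset I) ∈ H) (hne : u ≠ v) :
    lamb H C i₀ v = xor (lamb H C i₀ u) (decide (({u, v} : Finset I) ∈ C)) := by
  obtain ⟨γ, hγ, hj⟩ := exists_path hH hsc i₀ u
  have hlev : ({v} : Finset I) ∈ level H 1 := singleton_mem_level_one hH v
  have hR : ({u} : Finset I) ∪ {v} ∈ level H 2 := by
    rw [show ({u} : Finset I) ∪ {v} = {u, v} from (Finset.insert_eq u {v}).symm]
    exact ⟨huv, Finset.card_pair hne⟩
  obtain ⟨hγ', hj'⟩ := path_snoc hγ hj hlev hR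
  have hk : kappa C (γ ++ [({v} : Finset I)]) % 2
      = (kappa C γ + (if ({u, v} : Finset I) ∈ C then 1 else 0)) % 2 := by
    have := kappa_concat C hj.2 [({v} : Finset I)]
    rw [this]
    have := kappa_pair C u v
    omega
  have h1 := lamb_eq_true_iff hH hsc hC i₀ hγ hj
  have h2 := lamb_eq_true_iff hH hsc hC i₀ hγ' hj'
  rw [hk] at h2
  by_cases hm : ({u, v} : Finset I) ∈ C
  · rw [decide_eq_true hm, Bool.xor_true, if_pos hm] at *
    cases hbu : (lamb H C i₀ u) <;> cases hbv : (lamb H C i₀ v) <;>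
      rw [hbu] at h1 <;> rw [hbv] at h2 <;> simp_all <;> omega
  · rw [decide_eq_false hm, Bool.xor_false, if_neg hm] at *
    cases hbu : (lamb H C i₀ u) <;> cases hbv : (lamb H C i₀ v) <;>
      rw [hbu] at h1 <;> rw [hbv] at h2 <;> simp_all <;> omega


open Classical in
lemma lamb_triangle {H : Set (Finset I)} (hH : IsCSS H) (hsc : SimplyConnected H)
    {D : NodalDatum H} {C C' : Set (Finset I)}
    (hCs : IsSepBlock D C) (hC's : IsSepBlock D C') (hne : C ≠ C') (i₀ : I)
    {T f : Finset I} (hT : T ∈ level H 3) (hf : f ∈ C') (hfT : f ⊆ T)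
    {u v : I} (hu : u ∈ T) (hv : v ∈ T) : lamb H C i₀ u = lamb H C i₀ v := by
  by_cases huv : u = v
  · rw [huv]
  have hp2 : ({u, v} : Finset I) ⊆ T :=
    Finset.insert_subset hu (Finset.singleton_subset_iff.mpr hv)
  have hmemH : ({u, v} : Finset I) ∈ H := hH.1 T hT.1 _ hp2
  have hcard : ({u, v} : Finset I).card = 2 := Finset.card_pair huv
  have hfN2 := hC's.1.2.1 hf
  have hnotC : ({u, v} : Finset I) ∉ C := by
    intro hin
    by_cases hfe : f = ({u, v} : Finset I)
    · rw [hfe] at hf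
      exact hne (blocks_eq_of_inter hCs hC's hin hf)
    · have huni : ({u, v} : Finset I) ∪ f = T :=
        union_eq_of_two_subsets hT.2 hp2 hfT hcard hfN2.2.2 (fun h => hfe h.symm)
      have hfC : f ∈ C := absorb hCs hin hfN2.1 hfN2.2 (by rw [huni]; exact hT)
      exact hne (blocks_eq_of_inter hCs hC's hfC hf)
  have hstep := lamb_step hH hsc hCs i₀ hmemH huv
  rw [decide_eq_false hnotC, Bool.xor_false] at hstep
  exact hstep.symm

open Classical in
lemma corridor {H : Set (Finset I)} (hH : IsCSS H) (hsc : SimplyConnected H)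
    {D : NodalDatum H} {C C' : Set (Finset I)}
    (hCs : IsSepBlock D C) (hC's : IsSepBlock D C') (hne : C ≠ C') (i₀ : I) :
    ∀ g : List (Finset I), IsKPath H 2 g → (∀ x ∈ g, x ∈ C') →
      ∀ {e e' : Finset I}, Joins g e e' → ∀ u ∈ e, ∀ v ∈ e',
        lamb H C i₀ u = lamb H C i₀ v := by
  intro g
  induction g with
  | nil =>
    intro h
    exact absurd rfl h.1
  | cons f t ih =>
    intro hp hsup e e' hj u hu v hv
    have hfe : f = e := by simpa using hj.1
    have hfC' : f ∈ C' := hsup f List.mem_cons_self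
    have hf2 : f ∈ level H 2 := hp.2.1 f List.mem_cons_self
    cases t with
    | nil =>
      have he'f : e' = e := by
        have := hj.2
        simp only [List.getLast?] at this
        rw [hfe] at this
        simpa using this.symm
      subst he'f
      rw [← hfe] at hu hv
      by_cases huv : u = v
      · rw [huv]
      · have hfuv : f = ({u, v} : Finset I) := by
          refine (Finset.eq_of_subset_of_card_le
            (Finset.insert_subset hu (Finset.singleton_subset_iff.mpr hv)) ?_).symm
          rw [hf2.2, Finset.card_pair huv]
        have hnotC : ({u, v} : Finset I) ∉ C := by
          intro hin
          rw [hfuv] at hfC'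
          exact hne (blocks_eq_of_inter hCs hC's hin hfC')
        have hmemH : ({u, v} : Finset I) ∈ H := by
          rw [← hfuv]; exact hf2.1
        have hstep := lamb_step hH hsc hCs i₀ hmemH huv
        rw [decide_eq_false hnotC, Bool.xor_false] at hstep
        exact hstep.symm
    | cons f' t' =>
      have hf'C' : f' ∈ C' := hsup f' (by simp)
      have hT : f ∪ f' ∈ level H 3 := (List.isChain_cons_cons.mp hp.2.2).1
      obtain ⟨w, hwf'⟩ : ∃ w, w ∈ f' := by
        have hc2 := (hp.2.1 f' (by simp)).2
        have : 0 < f'.card := by omega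
        obtain ⟨w, hw⟩ := Finset.card_pos.mp this
        exact ⟨w, hw⟩
      have h1 : lamb H C i₀ u = lamb H C i₀ w :=
        lamb_triangle hH hsc hCs hC's hne i₀ hT hf'C' Finset.subset_union_right
          (Finset.mem_union_left _ (hfe ▸ hu)) (Finset.mem_union_right _ hwf')
      have hrest : IsKPath H 2 (f' :: t') :=
        ⟨List.cons_ne_nil _ _, fun x hx => hp.2.1 x (List.mem_cons_of_mem _ hx),
          (List.isChain_cons_cons.mp hp.2.2).2⟩
      have hj' : Joins (f' :: t') f' e' := ⟨rfl, by rw [← hj.2, List.getLast?_cons_cons]⟩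
      exact h1.trans (ih hrest (fun x hx => hsup x (List.mem_cons_of_mem _ hx)) hj' w hwf' v hv)

end Statement10Aux

/-- Let `δ^m ∈ Δ_m` be the common value of `Φ_m` on the vertices of the
strata of `B_{m+1}`. Then for every `c ∈ Δ_m` with `c ≠ δ^m` there is `λ_m(c) ∈ {0,1}`
such that `Φ_{m+1}({i}) = (c, λ_m(c))` for every `{i} ∈ Φ_m⁻¹(c)`. -/
theorem extension_constant_outside_next_block
    {I : Type*} [Fintype I] [DecidableEq I] (H : Set (Finset I))
    (hH : IsCSS H) (hsc : SimplyConnected H)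
    (D : NodalDatum H) (n : ℕ) (B : Fin n → Set (Finset I))
    (hblock : ∀ ℓ : Fin n, IsSepBlock D (B ℓ)) (hinj : Function.Injective B)
    (hsurj : ∀ C : Set (Finset I), IsSepBlock D C → ∃ ℓ : Fin n, C = B ℓ)
    (i₀ : I) (m : ℕ) (hm : m < n)
    (δm : Fin m → Bool) (hδ : δm ∈ Set.range (PhiM H i₀ B m hm.le))
    (hδcommon : ∀ i₁ i₂ : I, ({i₁, i₂} : Finset I) ∈ B ⟨m, hm⟩ →
      PhiM H i₀ B m hm.le i₁ = δm ∧ PhiM H i₀ B m hm.le i₂ = δm)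
    (c : Fin m → Bool) (hc : c ∈ Set.range (PhiM H i₀ B m hm.le)) (hcδ : c ≠ δm) :
    ∃ lam : Bool, ∀ i : I, PhiM H i₀ B m hm.le i = c →
      PhiM H i₀ B (m + 1) hm i = Fin.snoc c lam := by
  classical
  obtain ⟨ℓstar, hℓ⟩ : ∃ ℓ : Fin m, c ℓ ≠ δm ℓ := by
    by_contra hcon
    push_neg at hcon
    exact hcδ (funext hcon)
  set Bm : Set (Finset I) := B ⟨m, hm⟩ with hBmdef
  set ℓn : Fin n := Fin.castLE hm.le ℓstar with hℓndef
  set B' : Set (Finset I) := B ℓn with hB'def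
  have hBmsep : IsSepBlock D Bm := hblock _
  have hB'sep : IsSepBlock D B' := hblock _
  have hBne : Bm ≠ B' := by
    intro h
    have := hinj h
    have hv : m = (ℓstar : ℕ) := congrArg Fin.val this
    have := ℓstar.isLt
    omega
  have hphi : ∀ i : I, PhiM H i₀ B m hm.le i ℓstar = Statement10Aux.lamb H B' i₀ i :=
    fun i => rfl
  obtain ⟨e₀, he₀⟩ := hB'sep.1.1
  have he₀2 : e₀.card = 2 := (hB'sep.1.2.1 he₀).2.2
  obtain ⟨u₀, hu₀⟩ : ∃ u, u ∈ e₀ := by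
    have : 0 < e₀.card := by omega
    obtain ⟨u, hu⟩ := Finset.card_pos.mp this
    exact ⟨u, hu⟩
  set μ : Bool := Statement10Aux.lamb H Bm i₀ u₀ with hμdef
  have hcorr : ∀ {f : Finset I}, f ∈ B' → ∀ {u : I}, u ∈ f →
      Statement10Aux.lamb H Bm i₀ u = μ := by
    intro f hf u hu
    obtain ⟨g, hg, hgj, hgs⟩ := hB'sep.1.2.2.1 f hf e₀ he₀
    exact Statement10Aux.corridor hH hsc hBmsep hB'sep hBne i₀ g hg hgs hgj u hu u₀ hu₀
  set G : I → Bool := fun i =>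
    if Statement10Aux.lamb H B' i₀ i = c ℓstar then Statement10Aux.lamb H Bm i₀ i else μ
    with hGdef
  have hedge : ∀ u v : I, ({u, v} : Finset I) ∈ H → u ≠ v → G u = G v := by
    intro u v hmem hneuv
    by_cases hB : ({u, v} : Finset I) ∈ Bm
    · obtain ⟨h1, h2⟩ := hδcommon u v hB
      have g1 : Statement10Aux.lamb H B' i₀ u = δm ℓstar := by
        rw [← hphi u, h1]
      have g2 : Statement10Aux.lamb H B' i₀ v = δm ℓstar := by
        rw [← hphi v, h2]
      rw [hGdef]
      simp only
      rw [if_neg (by rw [g1]; exact fun h => hℓ h.symm),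
        if_neg (by rw [g2]; exact fun h => hℓ h.symm)]
    · by_cases hB'm : ({u, v} : Finset I) ∈ B'
      · have l1 : Statement10Aux.lamb H Bm i₀ u = μ :=
          hcorr hB'm (Finset.mem_insert_self _ _)
        have l2 : Statement10Aux.lamb H Bm i₀ v = μ :=
          hcorr hB'm (Finset.mem_insert_of_mem (Finset.mem_singleton_self _))
        rw [hGdef]
        simp only
        rw [l1, l2]
        split <;> split <;> rfl
      · have s1 := Statement10Aux.lamb_step hH hsc hBmsep i₀ hmem hneuv
        have s2 := Statement10Aux.lamb_step hH hsc hB'sep i₀ hmem hneuv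
        rw [decide_eq_false hB, Bool.xor_false] at s1
        rw [decide_eq_false hB'm, Bool.xor_false] at s2
        rw [hGdef]
        simp only
        rw [s1, s2]
  have hprop : ∀ g : List (Finset I), IsKPath H 1 g →
      ∀ {x y : I}, Joins g {x} {y} → G x = G y := by
    intro g
    induction g with
    | nil =>
      intro h
      exact absurd rfl h.1
    | cons J t ihp =>
      intro hp x y hj
      have hJ : J = {x} := by simpa using hj.1
      cases t with
      | nil =>
        have hyx : ({y} : Finset I) = {x} := by
          have := hj.2
          simp only [List.getLast?] at this
          rw [hJ] at this
          simpa using this.symm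
        rw [Finset.singleton_inj.mp hyx]
      | cons K t' =>
        subst hJ
        obtain ⟨w, hw⟩ : ∃ w, K = ({w} : Finset I) :=
          Finset.card_eq_one.mp (hp.2.1 K (by simp)).2
        subst hw
        have hchain := (List.isChain_cons_cons.mp hp.2.2).1
        have hxw : x ≠ w := by
          intro h
          have hc2 := hchain.2
          rw [← h] at hc2
          rw [show ({x} : Finset I) ∪ {x} = {x} from by ext z; simp,
            Finset.card_singleton] at hc2
          omega
        have hmem2 : ({x, w} : Finset I) ∈ H := by
          have := hchain.1
          rwa [show ({x} : Finset I) ∪ {w} = {x, w} from (Finset.insert_eq x {w}).symm]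
            at this
        have hrest : IsKPath H 1 (({w} : Finset I) :: t') :=
          ⟨List.cons_ne_nil _ _, fun z hz => hp.2.1 z (List.mem_cons_of_mem _ hz),
            (List.isChain_cons_cons.mp hp.2.2).2⟩
        have hj' : Joins (({w} : Finset I) :: t') {w} {y} :=
          ⟨rfl, by rw [← hj.2, List.getLast?_cons_cons]⟩
        exact (hedge x w hmem2 hxw).trans (ihp hrest hj')
  obtain ⟨i₁, hi₁⟩ := hc
  refine ⟨Statement10Aux.lamb H Bm i₀ i₁, ?_⟩
  intro i hi
  have hGi : G i = G i₁ := by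
    obtain ⟨γ, hγ, hjo⟩ := Statement10Aux.exists_path hH hsc i i₁
    exact hprop γ hγ hjo
  have hci : Statement10Aux.lamb H B' i₀ i = c ℓstar := by
    rw [← hphi i, hi]
  have hci₁ : Statement10Aux.lamb H B' i₀ i₁ = c ℓstar := by
    rw [← hphi i₁, hi₁]
  have hlam : Statement10Aux.lamb H Bm i₀ i = Statement10Aux.lamb H Bm i₀ i₁ := by
    rw [hGdef] at hGi
    simp only at hGi
    rwa [if_pos hci, if_pos hci₁] at hGi
  funext ℓ
  refine Fin.lastCases ?_ ?_ ℓ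
  · rw [Fin.snoc_last]
    show Statement10Aux.lamb H (B (Fin.castLE hm (Fin.last m))) i₀ i
      = Statement10Aux.lamb H Bm i₀ i₁
    rw [show Fin.castLE hm (Fin.last m) = (⟨m, hm⟩ : Fin n) from rfl]
    exact hlam
  · intro ℓ'
    rw [Fin.snoc_castSucc]
    show Statement10Aux.lamb H (B (Fin.castLE hm (Fin.castSucc ℓ'))) i₀ i = c ℓ'
    rw [show Fin.castLE hm (Fin.castSucc ℓ') = Fin.castLE hm.le ℓ' from rfl]
    exact congrFun hi ℓ'
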